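/- Let b > 0, θ₀ ∈ (0,1), and let f : ℝ → ℂ be continuously differentiable with ∫_ℝ |f(x)|² e^{2bπx²} dx < ∞ and such that |f'(x)| ≤ M e^{-θ₀ bπx²} for all x ∈ ℝ and some M > 0. Then there is a constant C > 0 such that |f(x)| ≤ C e^{-((1+θ₀)/2)·bπx²} for all x ∈ ℝ. -/

import Mathlib

open MeasureTheory Real

lemma sqrt_exp' (y : ℝ) : Real.sqrt (Real.exp y) = Real.exp (y / 2) := by
  rw [show Real.exp y = Real.exp (y / 2) ^ 2 by
    rw [← Real.exp_nat_mul]; push_cast; ring_nf, Real.sqrt_sq (Real.exp_pos _).le]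

lemma cs_Ioi (x : ℝ) (u v : ℝ → ℝ) (hu : Continuous u) (hv : Continuous v)
    (hun : ∀ t, 0 ≤ u t) (hvn : ∀ t, 0 ≤ v t)
    (hu2 : IntegrableOn (fun t => u t ^ 2) (Set.Ioi x))
    (hv2 : IntegrableOn (fun t => v t ^ 2) (Set.Ioi x)) :
    ∫ t in Set.Ioi x, u t * v t ≤
      Real.sqrt (∫ t in Set.Ioi x, u t ^ 2) * Real.sqrt (∫ t in Set.Ioi x, v t ^ 2) := by
  have hpq : Real.HolderConjugate 2 2 := Real.HolderConjugate.two_two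
  have h2 : (ENNReal.ofReal (2:ℝ)) = 2 := by norm_num
  have hmu : MemLp u (ENNReal.ofReal (2:ℝ)) (volume.restrict (Set.Ioi x)) := by
    rw [h2]
    exact (memLp_two_iff_integrable_sq
      hu.aestronglyMeasurable.restrict).mpr hu2
  have hmv : MemLp v (ENNReal.ofReal (2:ℝ)) (volume.restrict (Set.Ioi x)) := by
    rw [h2]
    exact (memLp_two_iff_integrable_sq
      hv.aestronglyMeasurable.restrict).mpr hv2
  have := integral_mul_le_Lp_mul_Lq_of_nonneg hpq
    (Filter.Eventually.of_forall hun) (Filter.Eventually.of_forall hvn) hmu hmv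
  have hru : ∀ (w : ℝ → ℝ), (∫ t in Set.Ioi x, w t ^ (2:ℝ)) = ∫ t in Set.Ioi x, w t ^ 2 := by
    intro w
    refine integral_congr_ae (Filter.Eventually.of_forall fun t => ?_)
    simp only [← Real.rpow_natCast (w t) 2]
    norm_num
  rw [hru u, hru v] at this
  rw [Real.sqrt_eq_rpow, Real.sqrt_eq_rpow]
  exact this

lemma aux_step (b θ₀ M : ℝ) (hb : 0 < b) (hθ0 : 0 < θ₀) (hM : 0 < M)
    (f : ℝ → ℂ) (hf : ContDiff ℝ 1 f)
    (hL2 : Integrable (fun x : ℝ => ‖f x‖ ^ 2 * Real.exp (2 * b * π * x ^ 2)))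
    (hderiv : ∀ x : ℝ, ‖deriv f x‖ ≤ M * Real.exp (-θ₀ * b * π * x ^ 2)) :
    ∃ C > 0, ∀ x : ℝ, 0 ≤ x → ‖f x‖ ≤ C * Real.exp (-((1 + θ₀) / 2) * b * π * x ^ 2) := by
  have hπ : (0:ℝ) < π := Real.pi_pos
  have hθbπ : 0 < θ₀ * b * π := by positivity
  have hfd : Differentiable ℝ f := hf.differentiable one_ne_zero
  have hfc : Continuous f := hfd.continuous
  have hf'c : Continuous (deriv f) := hf.continuous_deriv le_rfl
  -- Gaussian integrability
  have hgauss : ∀ a : ℝ, 0 < a → Integrable (fun x : ℝ => Real.exp (-a * x ^ 2)) := by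
    intro a ha
    simpa [neg_mul] using integrable_exp_neg_mul_sq ha
  -- deriv f is integrable
  have hint' : Integrable (deriv f) := by
    refine Integrable.mono' (((hgauss _ hθbπ).const_mul M)) hf'c.aestronglyMeasurable ?_
    filter_upwards with x
    simpa [neg_mul] using hderiv x
  -- f is integrable
  have hfint : Integrable f := by
    refine Integrable.mono' (hL2.add ((hgauss _ (by positivity : (0:ℝ) < 2*b*π)))) 
      hfc.aestronglyMeasurable ?_
    filter_upwards with x
    have he : (0:ℝ) < Real.exp (2 * b * π * x ^ 2) := Real.exp_pos _
    have heq : Real.exp (-(2*b*π) * x ^ 2) = (Real.exp (2 * b * π * x ^ 2))⁻¹ := by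
      rw [← Real.exp_neg]; ring_nf
    simp only [Pi.add_apply, norm_norm, heq]
    have hinv : Real.exp (2 * b * π * x ^ 2) * (Real.exp (2 * b * π * x ^ 2))⁻¹ = 1 :=
      mul_inv_cancel₀ he.ne'
    have hn : (0:ℝ) ≤ ‖f x‖ := norm_nonneg _
    nlinarith [sq_nonneg (‖f x‖ * Real.exp (2 * b * π * x ^ 2) - 1), inv_pos.mpr he, he,
      mul_pos (inv_pos.mpr he) he]
  -- f tends to 0 at +infinity
  have hlim : Filter.Tendsto f Filter.atTop (nhds 0) := by
    refine tendsto_zero_of_hasDerivAt_of_integrableOn_Ioi (a := 0) (f' := deriv f)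
      (fun x _ => (hfd x).hasDerivAt) hint'.integrableOn hfint.integrableOn
  -- bound for f on [0, ∞)
  obtain ⟨B, hB1, hB⟩ : ∃ B : ℝ, 1 ≤ B ∧ ∀ x : ℝ, 0 ≤ x → ‖f x‖ ≤ B := by
    have h1 : ∀ᶠ x in Filter.atTop, ‖f x‖ < 1 := by
      have := hlim.norm
      simp only [norm_zero] at this
      exact this.eventually_lt_const one_pos
    obtain ⟨A, hA⟩ := Filter.eventually_atTop.mp h1
    obtain ⟨C0, hC0⟩ := (isCompact_Icc (a := (0:ℝ)) (b := max A 0)).exists_bound_of_continuousOn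
      hfc.continuousOn
    refine ⟨max C0 1, le_max_right _ _, fun x hx => ?_⟩
    rcases le_total x (max A 0) with h | h
    · exact le_trans (hC0 x ⟨hx, h⟩) (le_max_left _ _)
    · exact le_trans (hA x (le_trans (le_max_left _ _) h)).le (le_max_right _ _)
  have hBpos : (0:ℝ) < B := lt_of_lt_of_le one_pos hB1
  -- constants
  set c : ℝ := (1 + θ₀) * b * π with hc
  have hcpos : 0 < c := by positivity
  set I : ℝ := ∫ t : ℝ, ‖f t‖ ^ 2 * Real.exp (2 * b * π * t ^ 2) with hI
  set K : ℝ := ∫ s : ℝ, Real.exp (-(2 * c) * s ^ 2) with hK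
  have hInn : 0 ≤ I := integral_nonneg fun t => by positivity
  have hKnn : 0 ≤ K := integral_nonneg fun t => by positivity
  set D : ℝ := 2 * M * (Real.sqrt I * Real.sqrt K) with hD
  have hDnn : 0 ≤ D := by positivity
  -- the squared bound
  have hsq : ∀ x : ℝ, 0 ≤ x → ‖f x‖ ^ 2 ≤ D * Real.exp (-c * x ^ 2) := by
    intro x hx
    set h : ℝ → ℂ := fun t => f t * f t with hh
    set h' : ℝ → ℂ := fun t => deriv f t * f t + f t * deriv f t with hh'
    have hd : ∀ t : ℝ, HasDerivAt h (h' t) t := fun t =>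
      ((hfd t).hasDerivAt).mul ((hfd t).hasDerivAt)
    have hlim2 : Filter.Tendsto h Filter.atTop (nhds 0) := by
      simpa using hlim.mul hlim
    have hh'c : Continuous h' := (hf'c.mul hfc).add (hfc.mul hf'c)
    have hbd : ∀ t : ℝ, 0 ≤ t → ‖h' t‖ ≤ 2 * B * M * Real.exp (-(θ₀ * b * π) * t ^ 2) := by
      intro t ht
      have h1 : ‖h' t‖ ≤ 2 * (‖f t‖ * ‖deriv f t‖) := by
        calc ‖h' t‖ ≤ ‖deriv f t * f t‖ + ‖f t * deriv f t‖ := norm_add_le _ _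
        _ = 2 * (‖f t‖ * ‖deriv f t‖) := by rw [norm_mul, norm_mul]; ring
      have h2 : ‖f t‖ * ‖deriv f t‖ ≤ B * (M * Real.exp (-(θ₀ * b * π) * t ^ 2)) := by
        have hb' : ‖deriv f t‖ ≤ M * Real.exp (-(θ₀ * b * π) * t ^ 2) := by
          have := hderiv t
          rw [show -(θ₀ * b * π) * t ^ 2 = -θ₀ * b * π * t ^ 2 by ring]
          exact this
        exact mul_le_mul (hB t ht) hb' (norm_nonneg _) hBpos.le
      calc ‖h' t‖ ≤ 2 * (B * (M * Real.exp (-(θ₀ * b * π) * t ^ 2))) := by linarith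
      _ = 2 * B * M * Real.exp (-(θ₀ * b * π) * t ^ 2) := by ring
    have h'int : IntegrableOn h' (Set.Ioi x) := by
      refine Integrable.mono' (((hgauss _ hθbπ).const_mul (2 * B * M)).integrableOn)
        hh'c.aestronglyMeasurable.restrict ?_
      refine (ae_restrict_iff' measurableSet_Ioi).mpr (Filter.Eventually.of_forall ?_)
      intro t ht
      exact hbd t (le_trans hx (le_of_lt ht))
    have key : ∫ t in Set.Ioi x, h' t = 0 - h x :=
      integral_Ioi_of_hasDerivAt_of_tendsto
        ((hfc.mul hfc).continuousWithinAt) (fun t _ => hd t) h'int hlim2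
    have hnx : ‖f x‖ ^ 2 = ‖h x‖ := by rw [hh]; simp [norm_mul, sq]
    -- pointwise comparison with u * v
    set u : ℝ → ℝ := fun t => ‖f t‖ * Real.exp (b * π * t ^ 2) with hu
    set v : ℝ → ℝ := fun t => Real.exp (-c * t ^ 2) with hv
    have huc : Continuous u := hfc.norm.mul (by fun_prop)
    have hvc : Continuous v := by fun_prop
    have hun : ∀ t, 0 ≤ u t := fun t => by positivity
    have hvn : ∀ t, 0 ≤ v t := fun t => by positivity
    have huv : ∀ t : ℝ, 0 ≤ t → ‖h' t‖ ≤ 2 * M * (u t * v t) := by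
      intro t ht
      have hev : Real.exp (b * π * t ^ 2) * Real.exp (-c * t ^ 2)
          = Real.exp (-(θ₀ * b * π) * t ^ 2) := by
        rw [← Real.exp_add]; congr 1; rw [hc]; ring
      have h1 : ‖h' t‖ ≤ 2 * (‖f t‖ * ‖deriv f t‖) := by
        calc ‖h' t‖ ≤ ‖deriv f t * f t‖ + ‖f t * deriv f t‖ := norm_add_le _ _
        _ = 2 * (‖f t‖ * ‖deriv f t‖) := by rw [norm_mul, norm_mul]; ring
      have h2 : ‖f t‖ * ‖deriv f t‖ ≤ ‖f t‖ * (M * Real.exp (-θ₀ * b * π * t ^ 2)) :=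
        mul_le_mul_of_nonneg_left (hderiv t) (norm_nonneg _)
      have h3 : 2 * M * (u t * v t) = 2 * (‖f t‖ * (M * Real.exp (-θ₀ * b * π * t ^ 2))) := by
        rw [hu, hv]
        simp only []
        rw [show ‖f t‖ * Real.exp (b * π * t ^ 2) * Real.exp (-c * t ^ 2)
            = ‖f t‖ * (Real.exp (b * π * t ^ 2) * Real.exp (-c * t ^ 2)) by ring, hev,
          show -(θ₀ * b * π) * t ^ 2 = -θ₀ * b * π * t ^ 2 by ring]
        ring
      rw [h3]
      linarith
    -- integrability of u * v on Ioi x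
    have huvint : IntegrableOn (fun t => 2 * M * (u t * v t)) (Set.Ioi x) := by
      refine Integrable.mono' (((hgauss _ hθbπ).const_mul (2 * M * B)).integrableOn)
        ((continuous_const.mul (huc.mul hvc)).aestronglyMeasurable.restrict) ?_
      refine (ae_restrict_iff' measurableSet_Ioi).mpr (Filter.Eventually.of_forall ?_)
      intro t ht
      have ht0 : (0:ℝ) ≤ t := le_trans hx ht.le
      have hev : Real.exp (b * π * t ^ 2) * Real.exp (-c * t ^ 2)
          = Real.exp (-(θ₀ * b * π) * t ^ 2) := by
        rw [← Real.exp_add]; congr 1; rw [hc]; ring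
      have : u t * v t = ‖f t‖ * Real.exp (-(θ₀ * b * π) * t ^ 2) := by
        rw [hu, hv]; simp only []; rw [mul_assoc, hev]
      rw [Real.norm_of_nonneg (by positivity), this]
      have := mul_le_mul_of_nonneg_right (hB t ht0) (Real.exp_nonneg (-(θ₀ * b * π) * t ^ 2))
      nlinarith [hM.le]
    -- step 1 : ‖f x‖^2 ≤ ∫ 2 M u v
    have step1 : ‖f x‖ ^ 2 ≤ ∫ t in Set.Ioi x, 2 * M * (u t * v t) := by
      rw [hnx]
      have : h x = -(∫ t in Set.Ioi x, h' t) := by rw [key]; ring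
      rw [this, norm_neg]
      calc ‖∫ t in Set.Ioi x, h' t‖ ≤ ∫ t in Set.Ioi x, ‖h' t‖ :=
        norm_integral_le_integral_norm _
      _ ≤ ∫ t in Set.Ioi x, 2 * M * (u t * v t) := by
        refine setIntegral_mono_on h'int.norm huvint measurableSet_Ioi ?_
        intro t ht
        exact huv t (le_trans hx ht.le)
    -- integrability of u^2 and v^2 on Ioi x
    have hu2 : IntegrableOn (fun t => u t ^ 2) (Set.Ioi x) := by
      have heq : (fun t : ℝ => u t ^ 2) = fun t : ℝ => ‖f t‖ ^ 2 * Real.exp (2 * b * π * t ^ 2) := by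
        funext t
        rw [hu]; simp only []
        rw [mul_pow, ← Real.exp_nat_mul]
        push_cast
        ring_nf
      rw [heq]
      exact hL2.integrableOn
    have hv2 : IntegrableOn (fun t => v t ^ 2) (Set.Ioi x) := by
      have heq : (fun t : ℝ => v t ^ 2) = fun t : ℝ => Real.exp (-(2 * c) * t ^ 2) := by
        funext t
        rw [hv]; simp only []
        rw [← Real.exp_nat_mul]
        push_cast
        ring_nf
      rw [heq]
      exact (hgauss _ (by positivity)).integrableOn
    -- Cauchy-Schwarz
    have cs := cs_Ioi x u v huc hvc hun hvn hu2 hv2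
    -- bound the two factors
    have hub : (∫ t in Set.Ioi x, u t ^ 2) ≤ I := by
      have heq : (fun t : ℝ => u t ^ 2) = fun t : ℝ => ‖f t‖ ^ 2 * Real.exp (2 * b * π * t ^ 2) := by
        funext t
        rw [hu]; simp only []
        rw [mul_pow, ← Real.exp_nat_mul]
        push_cast
        ring_nf
      rw [heq, hI]
      exact setIntegral_le_integral hL2 (Filter.Eventually.of_forall fun t => by positivity)
    have hvb : (∫ t in Set.Ioi x, v t ^ 2) ≤ Real.exp (-(2 * c) * x ^ 2) * K := by
      have heq : (fun t : ℝ => v t ^ 2) = fun t : ℝ => Real.exp (-(2 * c) * t ^ 2) := by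
        funext t
        rw [hv]; simp only []
        rw [← Real.exp_nat_mul]
        push_cast
        ring_nf
      rw [heq]
      have hshift : Integrable (fun t : ℝ =>
          Real.exp (-(2 * c) * x ^ 2) * Real.exp (-(2 * c) * (t - x) ^ 2)) :=
        ((hgauss _ (by positivity)).comp_sub_right x).const_mul _
      calc (∫ t in Set.Ioi x, Real.exp (-(2 * c) * t ^ 2))
          ≤ ∫ t in Set.Ioi x, Real.exp (-(2 * c) * x ^ 2) * Real.exp (-(2 * c) * (t - x) ^ 2) := by
            refine setIntegral_mono_on ((hgauss _ (by positivity)).integrableOn)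
              hshift.integrableOn measurableSet_Ioi ?_
            intro t ht
            rw [← Real.exp_add]
            apply Real.exp_le_exp.mpr
            have htx : x ≤ t := ht.le
            nlinarith [mul_nonneg (mul_nonneg hcpos.le hx) (sub_nonneg.mpr htx)]
      _ ≤ ∫ t : ℝ, Real.exp (-(2 * c) * x ^ 2) * Real.exp (-(2 * c) * (t - x) ^ 2) :=
            setIntegral_le_integral hshift (Filter.Eventually.of_forall fun t => by positivity)
      _ = Real.exp (-(2 * c) * x ^ 2) * K := by
            rw [integral_const_mul, hK]
            congr 1
            exact integral_sub_right_eq_self (fun s => Real.exp (-(2 * c) * s ^ 2)) x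
    -- put everything together
    have hexp : Real.sqrt (Real.exp (-(2 * c) * x ^ 2) * K)
        = Real.exp (-c * x ^ 2) * Real.sqrt K := by
      rw [Real.sqrt_mul (Real.exp_nonneg _), sqrt_exp']
      congr 2
      ring
    have hsqle : Real.sqrt (∫ t in Set.Ioi x, u t ^ 2) * Real.sqrt (∫ t in Set.Ioi x, v t ^ 2)
        ≤ Real.sqrt I * (Real.exp (-c * x ^ 2) * Real.sqrt K) := by
      rw [← hexp]
      exact mul_le_mul (Real.sqrt_le_sqrt hub) (Real.sqrt_le_sqrt hvb)
        (Real.sqrt_nonneg _) (Real.sqrt_nonneg _)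
    have hfin : (∫ t in Set.Ioi x, 2 * M * (u t * v t))
        ≤ 2 * M * (Real.sqrt I * (Real.exp (-c * x ^ 2) * Real.sqrt K)) := by
      rw [integral_const_mul]
      exact mul_le_mul_of_nonneg_left (le_trans cs hsqle) (by positivity)
    calc ‖f x‖ ^ 2 ≤ ∫ t in Set.Ioi x, 2 * M * (u t * v t) := step1
    _ ≤ 2 * M * (Real.sqrt I * (Real.exp (-c * x ^ 2) * Real.sqrt K)) := hfin
    _ = D * Real.exp (-c * x ^ 2) := by rw [hD]; ring
  -- conclude by taking square roots
  refine ⟨Real.sqrt D + 1, by positivity, fun x hx => ?_⟩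
  have h1 : ‖f x‖ = Real.sqrt (‖f x‖ ^ 2) := (Real.sqrt_sq (norm_nonneg _)).symm
  have h2 : Real.sqrt (‖f x‖ ^ 2) ≤ Real.sqrt (D * Real.exp (-c * x ^ 2)) :=
    Real.sqrt_le_sqrt (hsq x hx)
  have h3 : Real.sqrt (D * Real.exp (-c * x ^ 2))
      = Real.sqrt D * Real.exp (-((1 + θ₀) / 2) * b * π * x ^ 2) := by
    rw [Real.sqrt_mul hDnn, sqrt_exp']
    congr 2
    rw [hc]; ring
  rw [h1]
  refine le_trans h2 ?_
  rw [h3]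
  have := Real.exp_nonneg (-((1 + θ₀) / 2) * b * π * x ^ 2)
  nlinarith [Real.sqrt_nonneg D]

/-- one step of the bootstrap: an `L²` Gaussian bound for `f` together with a
pointwise Gaussian bound of exponent `θ₀bπ` for `f'` upgrades to a pointwise Gaussian bound for
`f` of exponent `((1+θ₀)/2)bπ`. -/
theorem stmt_8 (b θ₀ M : ℝ) (hb : 0 < b) (hθ0 : 0 < θ₀) (hθ1 : θ₀ < 1) (hM : 0 < M)
    (f : ℝ → ℂ) (hf : ContDiff ℝ 1 f)
    (hL2 : Integrable (fun x : ℝ => ‖f x‖ ^ 2 * Real.exp (2 * b * π * x ^ 2)))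
    (hderiv : ∀ x : ℝ, ‖deriv f x‖ ≤ M * Real.exp (-θ₀ * b * π * x ^ 2)) :
    ∃ C > 0, ∀ x : ℝ, ‖f x‖ ≤ C * Real.exp (-((1 + θ₀) / 2) * b * π * x ^ 2) := by
  obtain ⟨C1, hC1pos, hC1⟩ := aux_step b θ₀ M hb hθ0 hM f hf hL2 hderiv
  set g : ℝ → ℂ := fun x => f (-x) with hg
  have hgc : ContDiff ℝ 1 g := hf.comp contDiff_neg
  have hgL2 : Integrable (fun x : ℝ => ‖g x‖ ^ 2 * Real.exp (2 * b * π * x ^ 2)) := by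
    have h0 := hL2.comp_neg
    have : (fun x : ℝ => ‖f (-x)‖ ^ 2 * Real.exp (2 * b * π * (-x) ^ 2))
        = fun x : ℝ => ‖g x‖ ^ 2 * Real.exp (2 * b * π * x ^ 2) := by
      funext x
      rw [hg]
      simp [neg_sq]
    rwa [this] at h0
  have hgd : ∀ x : ℝ, ‖deriv g x‖ ≤ M * Real.exp (-θ₀ * b * π * x ^ 2) := by
    intro x
    have h1 : HasDerivAt g ((-1 : ℝ) • deriv f (-x)) x :=
      HasDerivAt.scomp x ((hf.differentiable one_ne_zero (-x)).hasDerivAt) (hasDerivAt_neg x)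
    rw [h1.deriv]
    rw [norm_smul]
    simp only [norm_neg, norm_one, one_mul, Real.norm_ofNat, norm_ofNat]
    calc ‖deriv f (-x)‖ ≤ M * Real.exp (-θ₀ * b * π * (-x) ^ 2) := hderiv (-x)
    _ = M * Real.exp (-θ₀ * b * π * x ^ 2) := by rw [neg_sq]
  obtain ⟨C2, hC2pos, hC2⟩ := aux_step b θ₀ M hb hθ0 hM g hgc hgL2 hgd
  refine ⟨max C1 C2, lt_max_of_lt_left hC1pos, fun x => ?_⟩
  rcases le_total 0 x with hx | hx
  · exact (hC1 x hx).trans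
      (mul_le_mul_of_nonneg_right (le_max_left _ _) (Real.exp_nonneg _))
  · have h2 := hC2 (-x) (by linarith)
    have hgx : g (-x) = f x := by rw [hg]; simp
    rw [hgx, neg_sq] at h2
    exact h2.trans (mul_le_mul_of_nonneg_right (le_max_right _ _) (Real.exp_nonneg _))
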